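/- For any quantum state ρ on a finite-dimensional Hilbert space and any unitary U, the purified distance between UρU† and ρ is at most sqrt(2‖U−𝟙‖_∞). -/

import Mathlib

open Matrix Kronecker ComplexOrder

noncomputable section

variable {n : Type*} [Fintype n] [DecidableEq n]

/-- The PSD square root, as `Matrix.PosSemidef.sqrt` was defined in Mathlib (Dec 2024);
it has since been removed. -/
def Matrix.PosSemidef.sqrt {m : Type*} [Fintype m] [DecidableEq m] {𝕜 : Type*} [RCLike 𝕜]
    {A : Matrix m m 𝕜} (hA : A.PosSemidef) : Matrix m m 𝕜 :=
  hA.1.eigenvectorUnitary.1 * diagonal ((↑) ∘ (√·) ∘ hA.1.eigenvalues) *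
    (star hA.1.eigenvectorUnitary : Matrix m m 𝕜)

open Classical in
/-- The square root of a matrix: the PSD square root if the matrix is PSD, else 0. -/
def msqrt (A : Matrix n n ℂ) : Matrix n n ℂ :=
  if h : A.PosSemidef then h.sqrt else 0

/-- The trace norm (Schatten 1-norm) of a matrix. -/
def trNorm (A : Matrix n n ℂ) : ℝ :=
  ((Matrix.posSemidef_conjTranspose_mul_self A).sqrt.trace).re

/-- The operator norm of a matrix, acting on the Euclidean space. -/
def opNorm (A : Matrix n n ℂ) : ℝ :=
  ‖(Matrix.toEuclideanCLM (𝕜 := ℂ) A : EuclideanSpace ℂ n →L[ℂ] EuclideanSpace ℂ n)‖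

/-- A (normalized) quantum state: positive semidefinite with unit trace. -/
def IsState (ρ : Matrix n n ℂ) : Prop := ρ.PosSemidef ∧ ρ.trace = 1

/-- A subnormalized quantum state: positive semidefinite with trace at most one. -/
def IsSubState (ρ : Matrix n n ℂ) : Prop := ρ.PosSemidef ∧ (ρ.trace).re ≤ 1

/-- Loewner (semidefinite) order: `A ≤ B` iff `B - A` is positive semidefinite. -/
def LoewnerLE (A B : Matrix n n ℂ) : Prop := (B - A).PosSemidef

/-- Fidelity `F(ρ,σ) = ‖√ρ√σ‖₁` (extended to positive operators). -/
def fid (ρ σ : Matrix n n ℂ) : ℝ := trNorm (msqrt ρ * msqrt σ)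

/-- Generalized fidelity for subnormalized states. -/
def gFid (ρ σ : Matrix n n ℂ) : ℝ :=
  fid ρ σ + Real.sqrt ((1 - ρ.trace.re) * (1 - σ.trace.re))

/-- (Generalized) purified distance `P(ρ,σ) = sqrt(1 - F(ρ,σ)²)`. -/
def pDist (ρ σ : Matrix n n ℂ) : ℝ := Real.sqrt (1 - (gFid ρ σ)^2)

/-- Generalized trace distance `δ(ρ,σ) = (‖ρ-σ‖₁ + |Tr(ρ-σ)|)/2` for subnormalized states. -/
def trDist (ρ σ : Matrix n n ℂ) : ℝ :=
  (trNorm (ρ - σ) + |(ρ.trace - σ.trace).re|) / 2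

variable {α β γ : Type*} [Fintype α] [DecidableEq α] [Fintype β] [DecidableEq β]
  [Fintype γ] [DecidableEq γ]

/-- Partial trace over the second tensor factor. -/
def ptrSnd (ρ : Matrix (α × β) (α × β) ℂ) : Matrix α α ℂ :=
  fun i j => ∑ k, ρ (i, k) (j, k)

/-- Partial trace over the first tensor factor. -/
def ptrFst (ρ : Matrix (α × β) (α × β) ℂ) : Matrix β β ℂ :=
  fun i j => ∑ k, ρ (k, i) (k, j)

/-- Partial trace over the middle factor of a tripartite system `(α × β) × γ`. -/
def ptrMid (ρ : Matrix ((α × β) × γ) ((α × β) × γ) ℂ) : Matrix (α × γ) (α × γ) ℂ :=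
  fun p q => ∑ m, ρ ((p.1, m), p.2) ((q.1, m), q.2)

/-- Max-relative entropy `D_max(ρ‖σ) = inf {λ : ρ ≤ 2^λ σ}`. -/
def Dmax (ρ σ : Matrix n n ℂ) : ℝ :=
  sInf {l : ℝ | LoewnerLE ρ (((2:ℝ) ^ l) • σ)}

open Classical in
/-- von Neumann entropy (base 2) of a matrix (0 if not Hermitian). -/
def vnEntropy (ρ : Matrix n n ℂ) : ℝ :=
  if h : ρ.IsHermitian then -∑ i, (h.eigenvalues i) * Real.logb 2 (h.eigenvalues i) else 0


section AuxProofLemmas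

open scoped MatrixOrder in
lemma Matrix.PosSemidef.sqrt_eq_cfc' {A : Matrix n n ℂ} (hA : A.PosSemidef) :
    hA.sqrt = CFC.sqrt A := by
  have h0 : (0 : Matrix n n ℂ) ≤ A := Matrix.nonneg_iff_posSemidef.mpr hA
  rw [CFC.sqrt_eq_real_sqrt A h0, cfcₙ_eq_cfc, Matrix.IsHermitian.cfc_eq hA.1, Matrix.IsHermitian.cfc,
    Unitary.conjStarAlgAut_apply]
  rfl

open scoped MatrixOrder in
lemma Matrix.PosSemidef.posSemidef_sqrt {A : Matrix n n ℂ} (hA : A.PosSemidef) :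
    hA.sqrt.PosSemidef := by
  rw [hA.sqrt_eq_cfc', ← Matrix.nonneg_iff_posSemidef]
  exact CFC.sqrt_nonneg A

open scoped MatrixOrder in
lemma Matrix.PosSemidef.sqrt_mul_self {A : Matrix n n ℂ} (hA : A.PosSemidef) :
    hA.sqrt * hA.sqrt = A := by
  rw [hA.sqrt_eq_cfc']
  exact CFC.sqrt_mul_sqrt_self A (Matrix.nonneg_iff_posSemidef.mpr hA)

open scoped MatrixOrder in
lemma Matrix.PosSemidef.eq_sqrt_of_sq_eq {A B : Matrix n n ℂ} (hA : A.PosSemidef)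
    (hB : B.PosSemidef) (hAB : A ^ 2 = B) : A = hB.sqrt := by
  rw [hB.sqrt_eq_cfc', ← hAB]
  exact (CFC.sqrt_sq A (Matrix.nonneg_iff_posSemidef.mpr hA)).symm

lemma herm_diag' {A : Matrix n n ℂ} (hA : A.IsHermitian) :
    star (hA.eigenvectorUnitary : Matrix n n ℂ) * A * (hA.eigenvectorUnitary : Matrix n n ℂ) =
      diagonal (RCLike.ofReal ∘ hA.eigenvalues) := by
  conv_lhs => arg 1; arg 2; rw [hA.spectral_theorem, Unitary.conjStarAlgAut_apply]
  simp only [← Matrix.mul_assoc, Unitary.coe_star_mul_self, Matrix.one_mul]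
  simp only [Matrix.mul_assoc, Unitary.coe_star_mul_self, Matrix.mul_one]

lemma aux_cs' (v w : n → ℂ) : ‖star v ⬝ᵥ w‖ ≤
    Real.sqrt ((star v ⬝ᵥ v).re) * Real.sqrt ((star w ⬝ᵥ w).re) := by
  let x : EuclideanSpace ℂ n := (WithLp.equiv 2 _).symm v
  let y : EuclideanSpace ℂ n := (WithLp.equiv 2 _).symm w
  have hxy : (inner ℂ x y : ℂ) = star v ⬝ᵥ w := by
    simp [x, y, PiLp.inner_apply, dotProduct, RCLike.inner_apply, Pi.star_apply,
      RCLike.star_def]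
    exact Finset.sum_congr rfl fun _ _ => mul_comm _ _
  have hxx : (inner ℂ x x : ℂ) = star v ⬝ᵥ v := by
    rw [EuclideanSpace.inner_eq_star_dotProduct]; exact dotProduct_comm _ _
  have hyy : (inner ℂ y y : ℂ) = star w ⬝ᵥ w := by
    rw [EuclideanSpace.inner_eq_star_dotProduct]; exact dotProduct_comm _ _
  have h := norm_inner_le_norm (𝕜 := ℂ) x y
  rw [norm_eq_sqrt_re_inner (𝕜 := ℂ) x, norm_eq_sqrt_re_inner (𝕜 := ℂ) y] at h
  rw [hxy, hxx, hyy] at h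
  exact h

lemma adj_dot' (A : Matrix n n ℂ) (v w : n → ℂ) :
    star v ⬝ᵥ (A *ᵥ w) = star (Aᴴ *ᵥ v) ⬝ᵥ w := by
  rw [Matrix.star_mulVec, conjTranspose_conjTranspose, dotProduct_mulVec]

lemma diag_entry' (A V : Matrix n n ℂ) (i : n) :
    (star V * A * V) i i = star (fun j => V j i) ⬝ᵥ (A *ᵥ fun j => V j i) := by
  rw [Matrix.mul_assoc]
  simp [Matrix.mul_apply, Matrix.mulVec, dotProduct, Matrix.star_apply]

lemma sqrt_congr' {A B : Matrix n n ℂ} (h : A = B) (hA : A.PosSemidef) (hB : B.PosSemidef) :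
    hA.sqrt = hB.sqrt := by subst h; rfl

lemma abs_trace_le' (N : Matrix n n ℂ) (hB : (N * Nᴴ).PosSemidef) :
    ‖N.trace‖ ≤ hB.sqrt.trace.re := by
  have hH : (N * Nᴴ).IsHermitian := hB.1
  set V : Matrix n n ℂ := (hH.eigenvectorUnitary : Matrix n n ℂ) with hVdef
  have hV1 : star V * V = 1 := mem_unitaryGroup_iff'.mp hH.eigenvectorUnitary.2
  have hV2 : V * star V = 1 := mem_unitaryGroup_iff.mp hH.eigenvectorUnitary.2
  have hdiag : star V * (N * Nᴴ) * V = diagonal (RCLike.ofReal ∘ hH.eigenvalues) :=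
    herm_diag' hH
  have hsq : hB.sqrt = V * diagonal (RCLike.ofReal ∘ Real.sqrt ∘ hH.eigenvalues) * star V := rfl
  have htrsq : hB.sqrt.trace.re = ∑ i, Real.sqrt (hH.eigenvalues i) := by
    rw [hsq, trace_mul_cycle, hV1, Matrix.one_mul, trace_diagonal]
    simp
  have htrN : N.trace = ∑ i, (star V * N * V) i i := by
    have h1 : (star V * N * V).trace = N.trace := by
      rw [trace_mul_cycle, hV2, Matrix.one_mul]
    rw [← h1]; rfl
  have hb : ∀ i, ‖(star V * N * V) i i‖ ≤ Real.sqrt (hH.eigenvalues i) := by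
    intro i
    set c : n → ℂ := fun j => V j i with hc
    have h1 : star c ⬝ᵥ c = 1 := by
      have : (star V * V) i i = (1 : Matrix n n ℂ) i i := by rw [hV1]
      simpa [Matrix.mul_apply, Matrix.one_apply, dotProduct, Matrix.star_apply] using this
    have h2 : star (Nᴴ *ᵥ c) ⬝ᵥ (Nᴴ *ᵥ c) = ((hH.eigenvalues i : ℝ) : ℂ) := by
      rw [← adj_dot' N c (Nᴴ *ᵥ c), Matrix.mulVec_mulVec, ← diag_entry' (N * Nᴴ) V i, hdiag]
      simp [Matrix.diagonal_apply_eq]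
    rw [diag_entry' N V i, adj_dot']
    calc ‖star (Nᴴ *ᵥ c) ⬝ᵥ c‖
        ≤ Real.sqrt ((star (Nᴴ *ᵥ c) ⬝ᵥ (Nᴴ *ᵥ c)).re) * Real.sqrt ((star c ⬝ᵥ c).re) :=
          aux_cs' _ _
      _ = Real.sqrt (hH.eigenvalues i) := by rw [h1, h2]; simp
  calc ‖N.trace‖ ≤ ∑ i, ‖(star V * N * V) i i‖ := by
        rw [htrN]; exact norm_sum_le _ _
    _ ≤ ∑ i, Real.sqrt (hH.eigenvalues i) := Finset.sum_le_sum fun i _ => hb i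
    _ = hB.sqrt.trace.re := htrsq.symm

lemma sqrt_dot_eq_norm' (w : n → ℂ) :
    Real.sqrt ((star w ⬝ᵥ w).re) = ‖(WithLp.equiv 2 (n → ℂ)).symm w‖ := by
  rw [norm_eq_sqrt_re_inner (𝕜 := ℂ)]
  congr 1
  rw [EuclideanSpace.inner_eq_star_dotProduct]; exact congrArg Complex.re (dotProduct_comm _ _)

open scoped Matrix.Norms.L2Operator in
lemma abs_trace_mul_le' (M ρ : Matrix n n ℂ) (hρ : ρ.PosSemidef) :
    ‖(M * ρ).trace‖ ≤ opNorm M * ρ.trace.re := by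
  have hH : ρ.IsHermitian := hρ.1
  set V : Matrix n n ℂ := (hH.eigenvectorUnitary : Matrix n n ℂ) with hVdef
  have hV1 : star V * V = 1 := mem_unitaryGroup_iff'.mp hH.eigenvectorUnitary.2
  have hV2 : V * star V = 1 := mem_unitaryGroup_iff.mp hH.eigenvectorUnitary.2
  have hρV : ρ * V = V * diagonal (RCLike.ofReal ∘ hH.eigenvalues) := by
    conv_lhs => rw [hH.spectral_theorem, Unitary.conjStarAlgAut_apply]
    rw [← hVdef, Matrix.mul_assoc, hV1, Matrix.mul_one]
  have hON : opNorm M = ‖M‖ := (Matrix.cstar_norm_def M).symm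
  have htrρ : ρ.trace.re = ∑ i, hH.eigenvalues i := by
    have h1 : (star V * ρ * V).trace = ρ.trace := by
      rw [trace_mul_cycle, hV2, Matrix.one_mul]
    rw [← h1, herm_diag' hH, trace_diagonal]
    simp
  have htr : (M * ρ).trace = ∑ i, (star V * (M * ρ) * V) i i := by
    have h1 : (star V * (M * ρ) * V).trace = (M * ρ).trace := by
      rw [trace_mul_cycle, hV2, Matrix.one_mul]
    rw [← h1]; rfl
  have hb : ∀ i, ‖(star V * (M * ρ) * V) i i‖ ≤ hH.eigenvalues i * opNorm M := by
    intro i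
    set c : n → ℂ := fun j => V j i with hc
    have h1 : star c ⬝ᵥ c = 1 := by
      have : (star V * V) i i = (1 : Matrix n n ℂ) i i := by rw [hV1]
      simpa [Matrix.mul_apply, Matrix.one_apply, dotProduct, Matrix.star_apply] using this
    have hρc : ρ *ᵥ c = ((hH.eigenvalues i : ℝ) : ℂ) • c := by
      have h2 : ρ *ᵥ c = fun j => (ρ * V) j i := by
        funext j; simp [Matrix.mulVec, Matrix.mul_apply, dotProduct, hc]
      rw [h2, hρV]
      funext j
      simp [Matrix.mul_diagonal, hc, mul_comm]
    have hMc : ‖star c ⬝ᵥ (M *ᵥ c)‖ ≤ opNorm M := by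
      calc ‖star c ⬝ᵥ (M *ᵥ c)‖
          ≤ Real.sqrt ((star c ⬝ᵥ c).re) * Real.sqrt ((star (M *ᵥ c) ⬝ᵥ (M *ᵥ c)).re) :=
            aux_cs' _ _
        _ = ‖(WithLp.equiv 2 (n → ℂ)).symm (M *ᵥ c)‖ := by
            rw [h1, sqrt_dot_eq_norm']; simp
        _ ≤ ‖M‖ * ‖(WithLp.equiv 2 (n → ℂ)).symm c‖ :=
            Matrix.l2_opNorm_mulVec M ((WithLp.equiv 2 (n → ℂ)).symm c)
        _ = opNorm M := by
            rw [← sqrt_dot_eq_norm', h1, hON]; simp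
    calc ‖(star V * (M * ρ) * V) i i‖
        = ‖star c ⬝ᵥ ((M * ρ) *ᵥ c)‖ := by rw [diag_entry']
      _ = hH.eigenvalues i * ‖star c ⬝ᵥ (M *ᵥ c)‖ := by
          rw [← Matrix.mulVec_mulVec, hρc, Matrix.mulVec_smul, dotProduct_smul]
          simp [abs_of_nonneg (hρ.eigenvalues_nonneg i)]
      _ ≤ hH.eigenvalues i * opNorm M :=
          mul_le_mul_of_nonneg_left hMc (hρ.eigenvalues_nonneg i)
  calc ‖(M * ρ).trace‖
      ≤ ∑ i, ‖(star V * (M * ρ) * V) i i‖ := by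
        rw [htr]; exact norm_sum_le _ _
    _ ≤ ∑ i, hH.eigenvalues i * opNorm M := Finset.sum_le_sum fun i _ => hb i
    _ = opNorm M * ρ.trace.re := by rw [htrρ, ← Finset.sum_mul, mul_comm]

end AuxProofLemmas

/-- For any quantum state ρ and unitary U, the purified distance between
`UρU†` and `ρ` is at most `sqrt(2‖U−𝟙‖_∞)`. -/
theorem pDist_unitary_conj_le {d : ℕ}
    (ρ U : Matrix (Fin d) (Fin d) ℂ) (hρ : IsState ρ)
    (hU : Uᴴ * U = 1) (hU' : U * Uᴴ = 1) :
    pDist (U * ρ * Uᴴ) ρ ≤ Real.sqrt (2 * opNorm (U - 1)) := by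
  obtain ⟨hPSD, htr1⟩ := hρ
  set S := hPSD.sqrt with hSdef
  have hSh : Sᴴ = S := hPSD.posSemidef_sqrt.1
  have hSS : S * S = ρ := hPSD.sqrt_mul_self
  have hσ : (U * ρ * Uᴴ).PosSemidef := hPSD.mul_mul_conjTranspose_same U
  have hUSU : (U * S * Uᴴ).PosSemidef := hPSD.posSemidef_sqrt.mul_mul_conjTranspose_same U
  have hsq2 : (U * S * Uᴴ) ^ 2 = U * ρ * Uᴴ := by
    have h1 : U * S * Uᴴ * (U * S * Uᴴ) = U * (S * ((Uᴴ * U) * (S * Uᴴ))) := by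
      simp only [Matrix.mul_assoc]
    rw [pow_two, h1, hU, Matrix.one_mul, ← Matrix.mul_assoc S S Uᴴ, hSS,
      ← Matrix.mul_assoc]
  have hmsρ : msqrt ρ = S := by rw [msqrt, dif_pos hPSD]
  have hmsσ : msqrt (U * ρ * Uᴴ) = U * S * Uᴴ := by
    rw [msqrt, dif_pos hσ]
    exact (hUSU.eq_sqrt_of_sq_eq hσ hsq2).symm
  set N := S * U * S with hNdef
  set Mm := U * S * Uᴴ * S with hMdef
  have hMN : Mmᴴ * Mm = N * Nᴴ := by
    have hsq2' : U * S * Uᴴ * (U * S * Uᴴ) = U * ρ * Uᴴ := by rw [← pow_two, hsq2]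
    have e0 : Mmᴴ = S * (U * S * Uᴴ) := by
      rw [hMdef, conjTranspose_mul, hSh]
      refine congrArg (HMul.hMul S) ?_
      rw [conjTranspose_mul, conjTranspose_mul, conjTranspose_conjTranspose, hSh]
      simp only [Matrix.mul_assoc]
    have e1 : Mmᴴ * Mm = S * (U * ρ * Uᴴ) * S := by
      rw [e0, hMdef]
      calc S * (U * S * Uᴴ) * (U * S * Uᴴ * S)
          = S * ((U * S * Uᴴ) * (U * S * Uᴴ)) * S := by simp only [Matrix.mul_assoc]
        _ = S * (U * ρ * Uᴴ) * S := by rw [hsq2']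
    have e2' : Nᴴ = S * (Uᴴ * S) := by
      rw [hNdef, conjTranspose_mul, conjTranspose_mul, hSh]
    have e2 : N * Nᴴ = S * (U * ρ * Uᴴ) * S := by
      rw [hNdef, e2']
      calc S * U * S * (S * (Uᴴ * S)) = S * (U * ((S * S) * (Uᴴ * S))) := by
            simp only [Matrix.mul_assoc]
        _ = S * (U * ρ * Uᴴ) * S := by rw [hSS]; simp only [Matrix.mul_assoc]
    rw [e1, e2]
  have hFf : ‖(U * ρ).trace‖ ≤ fid (U * ρ * Uᴴ) ρ := by
    have hB : (N * Nᴴ).PosSemidef := hMN ▸ posSemidef_conjTranspose_mul_self Mm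
    have h1 := abs_trace_le' N hB
    have h2 : trNorm Mm = hB.sqrt.trace.re := by
      rw [trNorm, sqrt_congr' hMN (posSemidef_conjTranspose_mul_self Mm) hB]
    have h3 : N.trace = (U * ρ).trace := by
      rw [hNdef, trace_mul_cycle, hSS, trace_mul_comm]
    rw [fid, hmsσ, hmsρ, ← hMdef, h2, ← h3]
    exact h1
  set ε := opNorm (U - 1) with hε
  have hε0 : 0 ≤ ε := norm_nonneg _
  set z := (U * ρ).trace with hz
  have h1U : ((1 - U) * ρ).trace = 1 - z := by
    rw [Matrix.sub_mul, trace_sub, Matrix.one_mul, htr1]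
  have hop : opNorm (1 - U) = ε := by
    have h : (1 : Matrix (Fin d) (Fin d) ℂ) - U = -(U - 1) := (neg_sub U 1).symm
    rw [hε, h, opNorm, map_neg, norm_neg]
    rfl
  have hr : 1 - z.re ≤ ε := by
    have h5 := abs_trace_mul_le' (1 - U) ρ hPSD
    rw [h1U, hop, htr1] at h5
    simp only [Complex.one_re, mul_one] at h5
    calc 1 - z.re = (1 - z).re := by simp
      _ ≤ ‖1 - z‖ := Complex.re_le_norm _
      _ ≤ ε := h5
  set F := fid (U * ρ * Uᴴ) ρ with hFdef
  have hF2 : 1 - F ^ 2 ≤ 2 * ε := by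
    have h4 : z.re ^ 2 ≤ ‖z‖ ^ 2 := by
      have h6 := Complex.abs_re_le_norm z
      calc z.re ^ 2 = |z.re| ^ 2 := (sq_abs _).symm
        _ ≤ ‖z‖ ^ 2 := pow_le_pow_left₀ (abs_nonneg _) h6 2
    have h5 : ‖z‖ ^ 2 ≤ F ^ 2 := pow_le_pow_left₀ (norm_nonneg z) hFf 2
    nlinarith [sq_nonneg (1 - z.re)]
  have hσtr : (U * ρ * Uᴴ).trace = 1 := by
    rw [trace_mul_cycle, hU, Matrix.one_mul, htr1]
  have hgF : gFid (U * ρ * Uᴴ) ρ = F := by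
    rw [gFid, hσtr, htr1, ← hFdef]
    simp
  rw [pDist, hgF]
  exact Real.sqrt_le_sqrt (by linarith)
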